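/- Assume H₀ and H₁ are complex Hilbert spaces, C : dom(C) ⊆ H₀ → H₁ is densely defined, closed and has closed range, and γ is a bounded operator on H₀ satisfying Hypothesis (Γ). Let A be the operator on H₀ × H₁ with domain dom(C) × dom(C*) given by A(u,v) = (−γu + C*v, −Cu), and let A* denote its Hilbert-space adjoint, namely the operator with domain dom(C) × dom(C*) given by A*(u,v) = (−γ*u − C*v, Cu). Then ker(A) = ker(A*). -/

import Mathlib

open Complex Filter
open scoped InnerProductSpace

/-- Hypothesis (Γ): there is a closed subspace `U`, a `c > 0`, and operators `γU` on `U`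
(with real part `≥ c`) and `γp` self-adjoint nonnegative on `Uᗮ` such that
`γ(x + y) = γU x + γp y` for `x ∈ U`, `y ∈ Uᗮ`. -/
def HypGamma {H : Type*} [NormedAddCommGroup H] [InnerProductSpace ℂ H] (γ : H →L[ℂ] H) : Prop :=
  ∃ (U : Submodule ℂ H) (c : ℝ) (γU : U →L[ℂ] U) (γp : Uᗮ →L[ℂ] Uᗮ),
    IsClosed (U : Set H) ∧ 0 < c ∧
    (∀ x : U, c * ‖x‖ ^ 2 ≤ (⟪x, γU x⟫_ℂ).re) ∧
    (∀ y z : Uᗮ, ⟪γp y, z⟫_ℂ = ⟪y, γp z⟫_ℂ) ∧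
    (∀ y : Uᗮ, 0 ≤ (⟪y, γp y⟫_ℂ).re) ∧
    (∀ (x : U) (y : Uᗮ), γ ((x : H) + (y : H)) = (γU x : H) + (γp y : H))

private lemma quad_aux (a b : ℝ) (hb : 0 ≤ b) (h : ∀ t : ℝ, 0 ≤ 2 * t * a + t ^ 2 * b) :
    a = 0 := by
  have hb1 : (0:ℝ) < b + 1 := by linarith
  have h1 := h (-a / (b + 1))
  have h2 : 0 ≤ (2 * (-a / (b + 1)) * a + (-a / (b + 1)) ^ 2 * b) * (b + 1) ^ 2 :=
    mul_nonneg h1 (sq_nonneg _)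
  have h3 : (2 * (-a / (b + 1)) * a + (-a / (b + 1)) ^ 2 * b) * (b + 1) ^ 2
      = -(a ^ 2) * (b + 2) := by
    field_simp
    ring
  rw [h3] at h2
  nlinarith [sq_nonneg a]

private lemma gamma_key {H : Type*} [NormedAddCommGroup H] [InnerProductSpace ℂ H]
    [CompleteSpace H] (γ : H →L[ℂ] H) (hγ : HypGamma γ) (u : H)
    (h : (⟪u, γ u⟫_ℂ).re = 0) :
    γ u = 0 ∧ ContinuousLinearMap.adjoint γ u = 0 := by
  obtain ⟨U, c, γU, γp, hUc, hc, hγU, hsym, hpos, hsum⟩ := hγ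
  haveI : CompleteSpace U := hUc.completeSpace_coe
  obtain ⟨xh, hxU, yh, hyU, huxy⟩ := U.exists_add_mem_mem_orthogonal u
  let x : U := ⟨xh, hxU⟩
  let y : Uᗮ := ⟨yh, hyU⟩
  -- expand the inner product
  have hexp : ∀ (a : U) (b : Uᗮ), ⟪(a:H) + (b:H), γ ((a:H) + (b:H))⟫_ℂ
      = ⟪a, γU a⟫_ℂ + ⟪b, γp b⟫_ℂ := by
    intro a b
    rw [hsum a b, inner_add_left, inner_add_right, inner_add_right,
      Submodule.inner_right_of_mem_orthogonal a.2 (γp b).2,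
      Submodule.inner_left_of_mem_orthogonal (γU a).2 b.2,
      Submodule.coe_inner, Submodule.coe_inner]
    ring
  have h0 : (⟪x, γU x⟫_ℂ).re + (⟪y, γp y⟫_ℂ).re = 0 := by
    have h' := hexp x y
    rw [show (x:H) + (y:H) = u from huxy.symm] at h'
    rw [h', Complex.add_re] at h
    exact h
  have hx0 : x = 0 := by
    have h1 := hγU x
    have h2 := hpos y
    have h3 : ‖x‖ ^ 2 ≤ 0 := by nlinarith
    have h4 : ‖x‖ = 0 := by nlinarith [sq_nonneg ‖x‖, norm_nonneg x]
    exact norm_eq_zero.mp h4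
  have hy0 : (⟪y, γp y⟫_ℂ).re = 0 := by
    rw [hx0] at h0
    simpa using h0
  -- quadratic trick: γp y = 0
  have hγpy : γp y = 0 := by
    set z : Uᗮ := γp y with hz
    have key : (⟪z, γp y⟫_ℂ).re = 0 := by
      apply quad_aux _ ((⟪z, γp z⟫_ℂ).re) (hpos z)
      intro t
      have hp := hpos (y + (t:ℂ) • z)
      have hsy : (⟪y, γp z⟫_ℂ).re = (⟪z, γp y⟫_ℂ).re := by
        rw [← hsym y z, ← inner_conj_symm]
        all_goals simp
      have hexp2 : (⟪y + (t:ℂ) • z, γp (y + (t:ℂ) • z)⟫_ℂ).re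
          = 2 * t * (⟪z, γp y⟫_ℂ).re + t ^ 2 * (⟪z, γp z⟫_ℂ).re := by
        rw [map_add, map_smul, inner_add_left, inner_add_right, inner_add_right,
          inner_smul_left, inner_smul_right, inner_smul_left, inner_smul_right]
        simp only [Complex.conj_ofReal, Complex.add_re, ← Complex.ofReal_mul,
          Complex.re_ofReal_mul, hy0, hsy, show (⟪y, γp y⟫_ℂ).re = 0 from hy0]
        ring
      rw [hexp2] at hp
      exact hp
    have hn : ‖γp y‖ ^ 2 = 0 := by
      rw [← inner_self_eq_norm_sq (𝕜 := ℂ) (γp y)]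
      exact key
    have : ‖γp y‖ = 0 := by nlinarith [norm_nonneg (γp y)]
    exact norm_eq_zero.mp this
  have hxh : xh = 0 := by simpa [x] using congrArg Subtype.val hx0
  have huy : u = yh := by rw [huxy, hxh, zero_add]
  constructor
  · have hgu : γ u = γ (((0 : U) : H) + (y : H)) := by rw [huy]; simp [y]
    rw [hgu, hsum 0 y, hγpy]
    simp
  · apply ext_inner_left ℂ
    intro w
    rw [ContinuousLinearMap.adjoint_inner_right]
    obtain ⟨xw, hxw, yw, hyw, hw⟩ := U.exists_add_mem_mem_orthogonal w
    have hgw : γ w = ((γU ⟨xw, hxw⟩ : U) : H) + ((γp ⟨yw, hyw⟩ : Uᗮ) : H) := by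
      rw [hw]; exact hsum ⟨xw, hxw⟩ ⟨yw, hyw⟩
    rw [← inner_conj_symm, huy]
    have h5 : ⟪yh, γ w⟫_ℂ = 0 := by
      rw [hgw, inner_add_right,
        Submodule.inner_left_of_mem_orthogonal (γU ⟨xw, hxw⟩).2 hyU]
      have h6 : ⟪yh, ((γp ⟨yw, hyw⟩ : Uᗮ) : H)⟫_ℂ = ⟪γp y, (⟨yw, hyw⟩ : Uᗮ)⟫_ℂ := by
        rw [hsym y ⟨yw, hyw⟩, Submodule.coe_inner]
      rw [h6, hγpy]
      simp
    rw [h5]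
    simp

/-- For `C` densely defined, closed, with closed range, and `γ` bounded
satisfying Hypothesis (Γ), the operator `A(u,v) = (−γu + C*v, −Cu)` and its adjoint
`A*(u,v) = (−γ*u − C*v, Cu)`, both with domain `dom C × dom C*`, have the same kernel. -/
theorem stmt_4
    {H₀ H₁ : Type*} [NormedAddCommGroup H₀] [InnerProductSpace ℂ H₀] [CompleteSpace H₀]
    [NormedAddCommGroup H₁] [InnerProductSpace ℂ H₁] [CompleteSpace H₁]
    (C : H₀ →ₗ.[ℂ] H₁)
    (hdense : Dense (C.domain : Set H₀))
    (hCclosed : IsClosed (C.graph : Set (H₀ × H₁)))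
    (hranC : IsClosed ((LinearMap.range C.toFun : Submodule ℂ H₁) : Set H₁))
    (γ : H₀ →L[ℂ] H₀) (hγ : HypGamma γ) :
    ∀ (u : C.domain) (v : C.adjoint.domain),
      (-(γ u) + C.adjoint v = 0 ∧ -(C u) = 0) ↔
      (-(ContinuousLinearMap.adjoint γ u) - C.adjoint v = 0 ∧ C u = 0) := by
  intro u v
  have hfa := LinearPMap.adjoint_isFormalAdjoint hdense (T := C)
  constructor
  · rintro ⟨h1, h2⟩
    have hCu : C u = 0 := by simpa using h2
    have hCv : C.adjoint v = γ u := by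
      rw [neg_add_eq_zero] at h1
      exact h1.symm
    have hre : (⟪(u : H₀), γ (u : H₀)⟫_ℂ).re = 0 := by
      have hi : ⟪(u : H₀), γ (u : H₀)⟫_ℂ = 0 := by
        rw [← hCv, ← inner_conj_symm, hfa v u, hCu]
        simp
      rw [hi]; simp
    obtain ⟨hg, hga⟩ := gamma_key γ hγ (u : H₀) hre
    refine ⟨?_, hCu⟩
    rw [hga, hCv, hg]
    simp
  · rintro ⟨h1, h2⟩
    have hCv : C.adjoint v = -(ContinuousLinearMap.adjoint γ u) :=
      (sub_eq_zero.mp h1).symm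
    have hre : (⟪(u : H₀), γ (u : H₀)⟫_ℂ).re = 0 := by
      have hi : ⟪(u : H₀), γ (u : H₀)⟫_ℂ = 0 := by
        rw [← ContinuousLinearMap.adjoint_inner_left,
          ← neg_neg (ContinuousLinearMap.adjoint γ (u : H₀)), ← hCv,
          inner_neg_left, hfa v u, h2]
        simp
      rw [hi]; simp
    obtain ⟨hg, hga⟩ := gamma_key γ hγ (u : H₀) hre
    have hCv0 : C.adjoint v = 0 := by rw [hCv, hga]; simp
    refine ⟨?_, by rw [h2]; simp⟩
    rw [hg, hCv0]
    simp
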